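/- (Recurrence for weighted (h,q)-Genocchi numbers) Let q be a real number with 0 < q < 1, let α > 0 be real, and let h be a positive integer. Then G̃_{0,q}^{(α,h)} = 0; moreover q^h · G̃_{1,q}^{(α,h)}(1) + G̃_{1,q}^{(α,h)} = [2]_q, and for every integer m ≥ 1, q^h · G̃_{m+1,q}^{(α,h)}(1)/(m+1) + G̃_{m+1,q}^{(α,h)}/(m+1) = 0. -/

import Mathlib

/-- The `q`-number `[x]_q = (1 - q^x)/(1 - q)` (real exponent, via `rpow`). -/
noncomputable def qnum (q x : ℝ) : ℝ := (1 - q ^ x) / (1 - q)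

/-- The weighted `(h,q)`-Genocchi polynomial
`G̃_{n,q}^{(α,h)}(x) = n·[2]_q·∑_{m≥0} (-1)^m q^{mh} [m+x]_{q^α}^{n-1}`
(for `n = 0` the prefactor `n` makes it `0`; `0^0 = 1` in the natural power). -/
noncomputable def hqGenocchi (q α : ℝ) (h n : ℕ) (x : ℝ) : ℝ :=
  (n : ℝ) * qnum q 2 *
    ∑' m : ℕ, (-1 : ℝ) ^ m * q ^ (m * h) * (qnum (q ^ α) ((m : ℝ) + x)) ^ (n - 1)

lemma qnum_nonneg_le {Q : ℝ} (hQ0 : 0 < Q) (hQ1 : Q < 1) {y : ℝ} (hy : 0 ≤ y) :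
    0 ≤ qnum Q y ∧ qnum Q y ≤ (1 - Q)⁻¹ := by
  have hd : 0 < 1 - Q := by linarith
  have h1 : Q ^ y ≤ 1 := Real.rpow_le_one hQ0.le hQ1.le hy
  have h2 : 0 ≤ Q ^ y := Real.rpow_nonneg hQ0.le y
  constructor
  · exact div_nonneg (by linarith) hd.le
  · rw [qnum, div_le_iff₀ hd]
    rw [inv_mul_cancel₀ hd.ne']
    linarith

lemma genocchi_summable (q α : ℝ) (hq0 : 0 < q) (hq1 : q < 1) (hα : 0 < α)
    (h : ℕ) (hh : 0 < h) (k : ℕ) (x : ℝ) (hx : 0 ≤ x) :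
    Summable (fun m : ℕ => (-1 : ℝ) ^ m * q ^ (m * h) * (qnum (q ^ α) ((m : ℝ) + x)) ^ k) := by
  have hQ0 : 0 < q ^ α := Real.rpow_pos_of_pos hq0 α
  have hQ1 : q ^ α < 1 := Real.rpow_lt_one hq0.le hq1 hα
  have hr0 : (0:ℝ) ≤ q ^ h := pow_nonneg hq0.le h
  have hr1 : q ^ h < 1 := pow_lt_one₀ hq0.le hq1 hh.ne'
  apply Summable.of_norm_bounded
    ((summable_geometric_of_lt_one hr0 hr1).mul_left ((1 - q ^ α)⁻¹ ^ k))
  intro m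
  have hy : (0:ℝ) ≤ (m : ℝ) + x := by positivity
  obtain ⟨hge, hle⟩ := qnum_nonneg_le hQ0 hQ1 hy
  have h1 : ‖(-1 : ℝ) ^ m * q ^ (m * h) * (qnum (q ^ α) ((m : ℝ) + x)) ^ k‖
      = q ^ (m * h) * (qnum (q ^ α) ((m : ℝ) + x)) ^ k := by
    rw [Real.norm_eq_abs, abs_mul, abs_mul, abs_pow, abs_neg, abs_one, one_pow, one_mul,
      abs_of_nonneg (pow_nonneg hq0.le _), abs_of_nonneg (pow_nonneg hge k)]
  rw [h1, mul_comm (m) h, pow_mul, mul_comm]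
  exact mul_le_mul_of_nonneg_right (pow_le_pow_left₀ hge hle k)
    (pow_nonneg (pow_nonneg hq0.le h) m)

lemma genocchi_key (q α : ℝ) (hq0 : 0 < q) (hq1 : q < 1) (hα : 0 < α)
    (h : ℕ) (hh : 0 < h) (k : ℕ) :
    q ^ h * hqGenocchi q α h (k + 1) 1 + hqGenocchi q α h (k + 1) 0
      = ((k : ℝ) + 1) * qnum q 2 * (0 : ℝ) ^ k := by
  have hQ0 : 0 < q ^ α := Real.rpow_pos_of_pos hq0 α
  set Q := q ^ α with hQ
  set a : ℕ → ℝ := fun m => (-1 : ℝ) ^ m * q ^ (m * h) * (qnum Q ((m : ℝ) + 0)) ^ k with ha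
  have hsa : Summable a := genocchi_summable q α hq0 hq1 hα h hh k 0 le_rfl
  have hs1 : Summable (fun m : ℕ => (-1 : ℝ) ^ m * q ^ (m * h) * (qnum Q ((m : ℝ) + 1)) ^ k) :=
    genocchi_summable q α hq0 hq1 hα h hh k 1 zero_le_one
  -- a 0 = 0 ^ k
  have ha0 : a 0 = (0:ℝ) ^ k := by
    simp only [ha, pow_zero, Nat.cast_zero, zero_mul, one_mul, add_zero]
    rw [qnum, Real.rpow_zero]
    norm_num
  -- the shift identity
  have hshift : ∀ m : ℕ, q ^ h * ((-1 : ℝ) ^ m * q ^ (m * h) * (qnum Q ((m : ℝ) + 1)) ^ k)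
      = -(a (m + 1)) := by
    intro m
    simp only [ha]
    rw [pow_succ, add_mul, one_mul, pow_add]
    push_cast
    ring
  have hsum0 : ∑' m : ℕ, a m = a 0 + ∑' m : ℕ, a (m + 1) := Summable.tsum_eq_zero_add hsa
  have hsum1 : q ^ h * ∑' m : ℕ, (-1 : ℝ) ^ m * q ^ (m * h) * (qnum Q ((m : ℝ) + 1)) ^ k
      = -∑' m : ℕ, a (m + 1) := by
    rw [← tsum_mul_left, ← tsum_neg]
    exact tsum_congr hshift
  have hcombo : q ^ h * (∑' m : ℕ, (-1 : ℝ) ^ m * q ^ (m * h) * (qnum Q ((m : ℝ) + 1)) ^ k)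
      + ∑' m : ℕ, a m = (0:ℝ) ^ k := by
    rw [hsum1, hsum0, ha0]; ring
  simp only [hqGenocchi, Nat.add_sub_cancel, Nat.cast_add, Nat.cast_one, ← hQ]
  calc q ^ h * (((k : ℝ) + 1) * qnum q 2 *
        ∑' m : ℕ, (-1 : ℝ) ^ m * q ^ (m * h) * (qnum Q ((m : ℝ) + 1)) ^ k)
      + ((k : ℝ) + 1) * qnum q 2 * ∑' m : ℕ, a m
      = ((k : ℝ) + 1) * qnum q 2 *
        (q ^ h * (∑' m : ℕ, (-1 : ℝ) ^ m * q ^ (m * h) * (qnum Q ((m : ℝ) + 1)) ^ k)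
          + ∑' m : ℕ, a m) := by ring
    _ = ((k : ℝ) + 1) * qnum q 2 * (0:ℝ) ^ k := by rw [hcombo]

theorem stmt10 (q α : ℝ) (hq0 : 0 < q) (hq1 : q < 1) (hα : 0 < α) (h : ℕ) (hh : 0 < h) :
    hqGenocchi q α h 0 0 = 0 ∧
    q ^ h * hqGenocchi q α h 1 1 + hqGenocchi q α h 1 0 = qnum q 2 ∧
    ∀ m : ℕ, 1 ≤ m →
      q ^ h * hqGenocchi q α h (m + 1) 1 / ((m : ℝ) + 1) +
        hqGenocchi q α h (m + 1) 0 / ((m : ℝ) + 1) = 0 := by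
  refine ⟨by simp [hqGenocchi], ?_, ?_⟩
  · have := genocchi_key q α hq0 hq1 hα h hh 0
    simpa using this
  · intro m hm
    have hk := genocchi_key q α hq0 hq1 hα h hh m
    have hz : (0:ℝ) ^ m = 0 := zero_pow (by omega)
    rw [hz, mul_zero] at hk
    rw [← add_div, div_eq_zero_iff]
    left
    exact hk
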